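/- Let f : ℝⁿ → ℝ be convex and differentiable, ψ : ℝⁿ → ℝ ∪ {+∞} convex, proper, and closed, F = f + ψ with minimizer x* and optimal value F*, and suppose F satisfies μ-optimal-set strong convexity at x with respect to x* for some μ > 0. Let H be a symmetric positive semidefinite matrix, γ ∈ (0,1], η ∈ [0,1), and suppose d satisfies Q(d) ≤ (1 − η)Q* and the sufficient decrease condition F(x) − F(x + d) ≥ −γQ(d). Then F(x + d) − F* ≤ (1 − γ(1 − η)μ/(μ + ‖H‖))·(F(x) − F*). -/

import Mathlib

/-
Setting: minimize F = f + ψ over ℝⁿ (modeled as `EuclideanSpace ℝ (Fin n)`), where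
f : ℝⁿ → ℝ is smooth and ψ : ℝⁿ → ℝ ∪ {+∞} (modeled as `EReal`-valued, never ⊥)
is convex, proper and closed.  The quadratic model at x with symmetric operator H is
Q(d) = ⟪∇f(x), d⟫ + (1/2)⟪H d, d⟫ + ψ(x+d) − ψ(x), and Δ(d) = ⟪∇f(x), d⟫ + ψ(x+d) − ψ(x).
-/

open scoped RealInnerProductSpace
open Set Filter Topology

noncomputable section

/-- Convexity for extended-real-valued functions (values in ℝ ∪ {±∞}). -/
def ConvexE {n : ℕ} (g : EuclideanSpace ℝ (Fin n) → EReal) : Prop :=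
  ∀ x y : EuclideanSpace ℝ (Fin n), ∀ a b : ℝ, 0 ≤ a → 0 ≤ b → a + b = 1 →
    g (a • x + b • y) ≤ (a : EReal) * g x + (b : EReal) * g y

/-- ψ is proper: it never takes the value −∞ (its values lie in ℝ ∪ {+∞})
and it is finite somewhere. -/
def ProperPsi {n : ℕ} (ψ : EuclideanSpace ℝ (Fin n) → EReal) : Prop :=
  (∀ x, ψ x ≠ ⊥) ∧ ∃ x, ψ x ≠ ⊤

/-- ψ is closed, i.e. lower semicontinuous. -/
def ClosedPsi {n : ℕ} (ψ : EuclideanSpace ℝ (Fin n) → EReal) : Prop :=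
  LowerSemicontinuous ψ

/-- H is a symmetric (self-adjoint) linear operator. -/
def SymmCLM {n : ℕ} (H : EuclideanSpace ℝ (Fin n) →L[ℝ] EuclideanSpace ℝ (Fin n)) : Prop :=
  ∀ u v, ⟪H u, v⟫ = ⟪u, H v⟫

/-- m is the smallest eigenvalue of the symmetric operator H
(characterized as the minimum of the Rayleigh quotient over the unit sphere). -/
def IsSmallestEigenvalue {n : ℕ} (H : EuclideanSpace ℝ (Fin n) →L[ℝ] EuclideanSpace ℝ (Fin n))
    (m : ℝ) : Prop :=
  IsLeast {r : ℝ | ∃ u : EuclideanSpace ℝ (Fin n), ‖u‖ = 1 ∧ r = ⟪H u, u⟫} m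

/-- The objective F = f + ψ (extended-real-valued). -/
def Fm {n : ℕ} (f : EuclideanSpace ℝ (Fin n) → ℝ) (ψ : EuclideanSpace ℝ (Fin n) → EReal)
    (x : EuclideanSpace ℝ (Fin n)) : EReal :=
  (f x : EReal) + ψ x

/-- The quadratic model Q(d) = ∇f(x)ᵀd + (1/2)dᵀHd + ψ(x+d) − ψ(x). -/
def Qm {n : ℕ} (f : EuclideanSpace ℝ (Fin n) → ℝ) (ψ : EuclideanSpace ℝ (Fin n) → EReal)
    (H : EuclideanSpace ℝ (Fin n) →L[ℝ] EuclideanSpace ℝ (Fin n))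
    (x d : EuclideanSpace ℝ (Fin n)) : EReal :=
  ((⟪gradient f x, d⟫ + 1 / 2 * ⟪H d, d⟫ : ℝ) : EReal) + ψ (x + d) - ψ x

/-- Δ(d) = ∇f(x)ᵀd + ψ(x+d) − ψ(x). -/
def Dm {n : ℕ} (f : EuclideanSpace ℝ (Fin n) → ℝ) (ψ : EuclideanSpace ℝ (Fin n) → EReal)
    (x d : EuclideanSpace ℝ (Fin n)) : EReal :=
  ((⟪gradient f x, d⟫ : ℝ) : EReal) + ψ (x + d) - ψ x

/-- g is σ-strongly convex: g − (σ/2)‖·‖² is convex. -/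
def StrongConvexE {n : ℕ} (σ : ℝ) (g : EuclideanSpace ℝ (Fin n) → EReal) : Prop :=
  ConvexE (fun d => g d - ((σ / 2 * ‖d‖ ^ 2 : ℝ) : EReal))

/-- The solution set Ω = argmin F. -/
def SolSet {n : ℕ} (f : EuclideanSpace ℝ (Fin n) → ℝ)
    (ψ : EuclideanSpace ℝ (Fin n) → EReal) : Set (EuclideanSpace ℝ (Fin n)) :=
  {y | ∀ z, Fm f ψ y ≤ Fm f ψ z}


lemma grad_ineq {n : ℕ} (f : EuclideanSpace ℝ (Fin n) → ℝ)
    (hf : Differentiable ℝ f) (hfconv : ConvexOn ℝ Set.univ f)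
    (x y : EuclideanSpace ℝ (Fin n)) :
    f x + ⟪gradient f x, y - x⟫ ≤ f y := by
  set v := y - x with hv
  have hφconv : ConvexOn ℝ Set.univ (fun t : ℝ => f (x + t • v)) := by
    refine ⟨convex_univ, fun t1 _ t2 _ a b ha hb hab => ?_⟩
    have h := hfconv.2 (Set.mem_univ (x + t1 • v)) (Set.mem_univ (x + t2 • v)) ha hb hab
    have he : a • (x + t1 • v) + b • (x + t2 • v) = x + (a * t1 + b * t2) • v := by
      match_scalars
      · linarith
      · ring
    rw [he] at h
    simpa only [smul_eq_mul] using h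
  have hc : HasDerivAt (fun t : ℝ => x + t • v) v 0 := by
    simpa using ((hasDerivAt_id (0:ℝ)).smul_const v).const_add x
  have hgrad : HasGradientAt f (gradient f x) (x + (0:ℝ) • v) := by
    simpa using (hf x).hasGradientAt
  have hF : HasFDerivAt f (InnerProductSpace.toDual ℝ _ (gradient f x)) (x + (0:ℝ) • v) :=
    hasGradientAt_iff_hasFDerivAt.mp hgrad
  have hφ : HasDerivAt (fun t : ℝ => f (x + t • v)) ⟪gradient f x, v⟫ 0 := by
    have := hF.comp_hasDerivAt 0 hc
    simpa [InnerProductSpace.toDual_apply_apply, Function.comp_def] using this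
  have key := hφconv.le_slope_of_hasDerivAt (Set.mem_univ (0:ℝ)) (Set.mem_univ (1:ℝ))
    one_pos hφ
  have h1 : x + (1:ℝ) • v = y := by rw [one_smul, hv]; abel
  have h0 : x + (0:ℝ) • v = x := by simp
  rw [slope_def_field, h1, h0] at key
  simp only [sub_zero, div_one] at key
  linarith

set_option maxHeartbeats 1000000 in
/-- With f convex differentiable, x* a minimizer of F, F satisfying
μ-optimal-set strong convexity at x (μ > 0), H symmetric psd, γ ∈ (0,1], η ∈ [0,1),
if Q(d) ≤ (1 − η)Q* and the sufficient decrease condition F(x) − F(x + d) ≥ −γQ(d)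
holds, then F(x + d) − F* ≤ (1 − γ(1 − η)μ/(μ + ‖H‖))(F(x) − F*). -/
theorem linear_rate_step_sufficient_decrease {n : ℕ}
    (f : EuclideanSpace ℝ (Fin n) → ℝ) (ψ : EuclideanSpace ℝ (Fin n) → EReal)
    (H : EuclideanSpace ℝ (Fin n) →L[ℝ] EuclideanSpace ℝ (Fin n))
    (x xstar d : EuclideanSpace ℝ (Fin n)) (μ γ η : ℝ)
    (hf : Differentiable ℝ f) (hfconv : ConvexOn ℝ Set.univ f)
    (hψconv : ConvexE ψ) (hψproper : ProperPsi ψ) (hψclosed : ClosedPsi ψ)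
    (hdom : ψ x ≠ ⊤)
    (hmin : ∀ y, Fm f ψ xstar ≤ Fm f ψ y)
    (hμ : 0 < μ)
    (hossc : ∀ lam : ℝ, lam ∈ Set.Icc (0 : ℝ) 1 →
        Fm f ψ (lam • x + (1 - lam) • xstar) ≤
          ((lam : ℝ) : EReal) * Fm f ψ x + ((1 - lam : ℝ) : EReal) * Fm f ψ xstar -
            ((μ * lam * (1 - lam) / 2 * ‖x - xstar‖ ^ 2 : ℝ) : EReal))
    (hH : SymmCLM H) (hHpsd : ∀ e : EuclideanSpace ℝ (Fin n), 0 ≤ ⟪H e, e⟫)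
    (hγ0 : 0 < γ) (hγ1 : γ ≤ 1) (hη0 : 0 ≤ η) (hη1 : η < 1)
    (happrox : Qm f ψ H x d ≤ ((1 - η : ℝ) : EReal) * ⨅ e, Qm f ψ H x e)
    (hdecrease : ((-γ : ℝ) : EReal) * Qm f ψ H x d ≤ Fm f ψ x - Fm f ψ (x + d)) :
    Fm f ψ (x + d) - Fm f ψ xstar ≤
      ((1 - γ * (1 - η) * μ / (μ + ‖H‖) : ℝ) : EReal) * (Fm f ψ x - Fm f ψ xstar) := by
  obtain ⟨hψbot, -⟩ := hψproper
  have hpos : (0:ℝ) < 1 - η := by linarith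
  -- ψ x is real
  obtain ⟨a, ha⟩ : ∃ a : ℝ, ψ x = (a : EReal) := ⟨_, (EReal.coe_toReal hdom (hψbot x)).symm⟩
  -- F(x*) is real
  have hminx := hmin x
  have hbtop : ψ xstar ≠ ⊤ := by
    intro h
    rw [Fm, h, EReal.add_top_of_ne_bot (EReal.coe_ne_bot _), Fm, ha, ← EReal.coe_add,
      top_le_iff] at hminx
    exact EReal.coe_ne_top _ hminx
  obtain ⟨b, hb⟩ : ∃ b : ℝ, ψ xstar = (b : EReal) :=
    ⟨_, (EReal.coe_toReal hbtop (hψbot xstar)).symm⟩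
  set Qs := ⨅ e, Qm f ψ H x e with hQsdef
  clear_value Qs
  have hQ0 : Qm f ψ H x 0 = 0 := by simp [Qm, ha, ← EReal.coe_sub]
  have hinf_le : Qs ≤ 0 := by rw [hQsdef]; exact hQ0 ▸ iInf_le _ 0
  have hQsT : Qs ≠ ⊤ := fun h => by simp [h] at hinf_le
  -- ψ(x+d) is real
  have hctop : ψ (x + d) ≠ ⊤ := by
    intro h
    have hQd : Qm f ψ H x d = ⊤ := by
      rw [Qm, ha, h, EReal.add_top_of_ne_bot (EReal.coe_ne_bot _), EReal.top_sub_coe]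
    rw [hQd, top_le_iff] at happrox
    by_cases hB : Qs = ⊥
    · rw [hB, EReal.coe_mul_bot_of_pos (by exact_mod_cast hpos)] at happrox
      exact bot_ne_top happrox
    · obtain ⟨q, hq⟩ : ∃ q : ℝ, Qs = (q : EReal) := ⟨_, (EReal.coe_toReal hQsT hB).symm⟩
      rw [hq, ← EReal.coe_mul] at happrox
      exact EReal.coe_ne_top _ happrox
  obtain ⟨c, hc⟩ : ∃ c : ℝ, ψ (x + d) = (c : EReal) :=
    ⟨_, (EReal.coe_toReal hctop (hψbot _)).symm⟩
  have hQdval : Qm f ψ H x d = ((⟪gradient f x, d⟫ + 1 / 2 * ⟪H d, d⟫ + c - a : ℝ) : EReal) := by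
    rw [Qm, ha, hc]; norm_cast
  set qd : ℝ := ⟪gradient f x, d⟫ + 1 / 2 * ⟪H d, d⟫ + c - a with hqddef
  clear_value qd
  -- Qs is real
  have hQsB : Qs ≠ ⊥ := by
    intro h
    rw [hQdval, h, EReal.coe_mul_bot_of_pos (by exact_mod_cast hpos), le_bot_iff] at happrox
    exact EReal.coe_ne_bot _ happrox
  obtain ⟨qs, hqs⟩ : ∃ q : ℝ, Qs = (q : EReal) := ⟨_, (EReal.coe_toReal hQsT hQsB).symm⟩
  -- translate happrox and hdecrease to reals
  have happroxR : qd ≤ (1 - η) * qs := by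
    rw [hQdval, hqs, ← EReal.coe_mul, EReal.coe_le_coe_iff] at happrox
    exact happrox
  have hdecR : -γ * qd ≤ (f x + a) - (f (x + d) + c) := by
    rw [hQdval, ← EReal.coe_mul, Fm, Fm, ha, hc, ← EReal.coe_add, ← EReal.coe_add,
      ← EReal.coe_sub, EReal.coe_le_coe_iff] at hdecrease
    exact hdecrease
  -- F(x*) ≤ F(x) in reals
  have hminxR : f xstar + b ≤ f x + a := by
    rw [Fm, Fm, ha, hb, ← EReal.coe_add, ← EReal.coe_add, EReal.coe_le_coe_iff] at hminx
    exact hminx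
  -- the key evaluation point
  have hHnorm : (0:ℝ) ≤ ‖H‖ := norm_nonneg _
  have hden : (0:ℝ) < μ + ‖H‖ := by linarith
  set lam : ℝ := μ / (μ + ‖H‖) with hlamdef
  clear_value lam
  have hlam0 : 0 < lam := hlamdef ▸ div_pos hμ hden
  have hlam1 : lam ≤ 1 := by
    rw [hlamdef, div_le_one hden]; linarith
  have hlameq : lam * (μ + ‖H‖) = μ := by rw [hlamdef]; exact div_mul_cancel₀ _ hden.ne'
  set e : EuclideanSpace ℝ (Fin n) := lam • (xstar - x) with hedef
  clear_value e
  have hxe : x + e = (1 - lam) • x + (1 - (1 - lam)) • xstar := by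
    rw [hedef]; match_scalars <;> ring
  -- optimal-set strong convexity at lam' = 1 - lam
  have hoss := hossc (1 - lam) ⟨by linarith, by linarith⟩
  rw [← hxe] at hoss
  -- F(x+e) is real
  have hetop : ψ (x + e) ≠ ⊤ := by
    intro h
    rw [Fm, h, EReal.add_top_of_ne_bot (EReal.coe_ne_bot _), top_le_iff] at hoss
    rw [Fm, Fm, ha, hb, ← EReal.coe_add, ← EReal.coe_add, ← EReal.coe_mul, ← EReal.coe_mul,
      ← EReal.coe_add, ← EReal.coe_sub] at hoss
    exact EReal.coe_ne_top _ hoss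
  obtain ⟨ce, hce⟩ : ∃ q : ℝ, ψ (x + e) = (q : EReal) :=
    ⟨_, (EReal.coe_toReal hetop (hψbot _)).symm⟩
  have hossR : f (x + e) + ce ≤
      (1 - lam) * (f x + a) + (1 - (1 - lam)) * (f xstar + b) -
        μ * (1 - lam) * (1 - (1 - lam)) / 2 * ‖x - xstar‖ ^ 2 := by
    rw [Fm, Fm, Fm, ha, hb, hce, ← EReal.coe_add, ← EReal.coe_add, ← EReal.coe_add,
      ← EReal.coe_mul, ← EReal.coe_mul, ← EReal.coe_add, ← EReal.coe_sub,
      EReal.coe_le_coe_iff] at hoss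
    exact hoss
  -- gradient inequality
  have hgradR : ⟪gradient f x, e⟫ ≤ f (x + e) - f x := by
    have := grad_ineq f hf hfconv x (x + e)
    rw [add_sub_cancel_left] at this
    linarith
  -- bound on the quadratic term
  have hHe : ⟪H e, e⟫ ≤ ‖H‖ * (lam ^ 2 * ‖x - xstar‖ ^ 2) := by
    have h1 : ⟪H e, e⟫ ≤ ‖H e‖ * ‖e‖ := real_inner_le_norm _ _
    have h2 : ‖H e‖ ≤ ‖H‖ * ‖e‖ := H.le_opNorm e
    have h3 : ‖e‖ = lam * ‖x - xstar‖ := by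
      rw [hedef, norm_smul, Real.norm_eq_abs, abs_of_pos hlam0, norm_sub_rev]
    have h4 : ⟪H e, e⟫ ≤ ‖H‖ * ‖e‖ * ‖e‖ :=
      h1.trans (mul_le_mul_of_nonneg_right h2 (norm_nonneg e))
    rw [h3] at h4
    refine h4.trans_eq ?_
    ring
  -- Qs ≤ Q(e) in reals
  have hQe : (qs : EReal) ≤ Qm f ψ H x e := by
    rw [← hqs, hQsdef]; exact iInf_le _ e
  have hQeval : Qm f ψ H x e = ((⟪gradient f x, e⟫ + 1 / 2 * ⟪H e, e⟫ + ce - a : ℝ) : EReal) := by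
    rw [Qm, ha, hce]; norm_cast
  have hQeR : qs ≤ ⟪gradient f x, e⟫ + 1 / 2 * ⟪H e, e⟫ + ce - a := by
    rw [hQeval, EReal.coe_le_coe_iff] at hQe
    exact hQe
  -- key: qs ≤ -lam * ((f x + a) - (f xstar + b))
  have hkey : qs ≤ -lam * ((f x + a) - (f xstar + b)) := by
    have hcancel : lam * ‖H‖ = μ * (1 - lam) := by
      linear_combination hlameq
    have hc2 : lam * (lam * ‖H‖) * ‖x - xstar‖ ^ 2 =
        lam * (μ * (1 - lam)) * ‖x - xstar‖ ^ 2 := by rw [hcancel]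
    nlinarith [hQeR, hgradR, hossR, hHe, hc2]
  -- final computation in reals
  have hfinalR : (f (x + d) + c) - (f xstar + b) ≤
      (1 - γ * (1 - η) * μ / (μ + ‖H‖)) * ((f x + a) - (f xstar + b)) := by
    have h1 : γ * qd ≤ γ * ((1 - η) * qs) := mul_le_mul_of_nonneg_left happroxR hγ0.le
    have h2 : (γ * (1 - η)) * qs ≤ (γ * (1 - η)) * (-lam * ((f x + a) - (f xstar + b))) :=
      mul_le_mul_of_nonneg_left hkey (mul_nonneg hγ0.le hpos.le)
    have hco : γ * (1 - η) * μ / (μ + ‖H‖) = γ * (1 - η) * lam := by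
      rw [hlamdef]; ring
    rw [hco]
    linarith [h1, h2, hdecR]
  -- back to EReal
  rw [Fm, Fm, Fm, ha, hb, hc, ← EReal.coe_add, ← EReal.coe_add, ← EReal.coe_add,
    ← EReal.coe_sub, ← EReal.coe_sub, ← EReal.coe_mul, EReal.coe_le_coe_iff]
  exact hfinalR
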